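/- Let $n \geq 2$, $R_0 > 0$, $p \in (1, n)$, $q = np/(n-p)$, $\delta \in (0,1)$, and let $v:\mathbb{R}^n \to [0,\infty)$ be measurable with $v \in L^p \cap L^q$, satisfying the pointwise bound $v(\xi) \leq \min\{1, (8R_0/|\xi|)^{n/p - 1}\}$ for all $\xi$, and $\int_{\mathbb{R}^n} v^q\,d\xi \leq 2$. Then $\int_{\mathbb{R}^n} |\xi|^{\delta p} v(\xi)^q\,d\xi \leq 2^{1-\delta}(8R_0)^{\delta p}\big(\int_{\mathbb{R}^n} v^p\,d\xi\big)^{\delta}$. -/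

import Mathlib

open MeasureTheory

theorem stmt11 (n : ℕ) (hn : 2 ≤ n) (R0 p q δ : ℝ) (hR0 : 0 < R0) (hp : 1 < p) (hpn : p < n)
    (hq : q = n * p / (n - p)) (hδ : 0 < δ) (hδ1 : δ < 1)
    (v : EuclideanSpace ℝ (Fin n) → ℝ) (hv : Measurable v) (hvpos : ∀ ξ, 0 ≤ v ξ)
    (hLp : Integrable (fun ξ => v ξ ^ p)) (hLq : Integrable (fun ξ => v ξ ^ q))
    (hbound0 : ∀ ξ, v ξ ≤ 1)
    (hbound : ∀ ξ : EuclideanSpace ℝ (Fin n), ξ ≠ 0 →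
      v ξ ≤ min 1 ((8 * R0 / ‖ξ‖) ^ ((n : ℝ)/p - 1)))
    (hq2 : ∫ ξ, v ξ ^ q ≤ 2) :
    ∫⁻ ξ, ENNReal.ofReal (‖ξ‖ ^ (δ * p) * v ξ ^ q) ≤
      ENNReal.ofReal (2 ^ (1 - δ) * (8 * R0) ^ (δ * p) * (∫ ξ, v ξ ^ p) ^ δ) := by
  have hp0 : (0 : ℝ) < p := lt_trans one_pos hp
  have hnp : (0 : ℝ) < (n : ℝ) - p := by linarith
  have h1δ : (0 : ℝ) < 1 - δ := by linarith
  have hqp : q - p = p ^ 2 / ((n : ℝ) - p) := by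
    rw [hq]; field_simp; ring
  have hpq : p < q := by
    have h : (0 : ℝ) < p ^ 2 / ((n : ℝ) - p) := by positivity
    linarith [hqp ▸ h]
  have hq0 : (0 : ℝ) < q := by linarith
  have hkey : ((n : ℝ) / p - 1) * (q - p) = p := by
    rw [hqp]; field_simp
  set a : ℝ := δ * p / (1 - δ) with ha
  set c : ℝ := δ * (q - p) / (1 - δ) with hc
  have hqp0 : 0 < q - p := by linarith
  have ha0 : 0 < a := by positivity
  have hc0 : 0 < c := by positivity
  have hR8 : (0 : ℝ) < 8 * R0 := by linarith
  have hδp0 : 0 < δ * p := by positivity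
  have hqδp : 0 < q - δ * p := by nlinarith
  -- key pointwise bound
  have claim : ∀ ξ : EuclideanSpace ℝ (Fin n), ‖ξ‖ ^ a * v ξ ^ c ≤ (8 * R0) ^ a := by
    intro ξ
    rcases le_or_gt ‖ξ‖ (8 * R0) with h | h
    · have h1 : v ξ ^ c ≤ 1 := by
        calc v ξ ^ c ≤ 1 ^ c := Real.rpow_le_rpow (hvpos ξ) (hbound0 ξ) hc0.le
        _ = 1 := Real.one_rpow c
      calc ‖ξ‖ ^ a * v ξ ^ c ≤ ‖ξ‖ ^ a * 1 :=
            mul_le_mul_of_nonneg_left h1 (Real.rpow_nonneg (norm_nonneg ξ) a)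
        _ = ‖ξ‖ ^ a := mul_one _
        _ ≤ (8 * R0) ^ a := Real.rpow_le_rpow (norm_nonneg ξ) h ha0.le
    · have hξ0 : ξ ≠ 0 := by
        intro h0; rw [h0, norm_zero] at h; linarith
      have hnorm0 : (0 : ℝ) < ‖ξ‖ := by linarith
      have hb : v ξ ≤ (8 * R0 / ‖ξ‖) ^ ((n : ℝ) / p - 1) :=
        (hbound ξ hξ0).trans (min_le_right _ _)
      have hdiv : (0 : ℝ) ≤ 8 * R0 / ‖ξ‖ := by positivity
      have hexp : ((n : ℝ) / p - 1) * c = a := by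
        have h2 : ((n : ℝ) / p - 1) * c = δ * (((n : ℝ) / p - 1) * (q - p)) / (1 - δ) := by
          rw [hc]; ring
        rw [h2, hkey, ha]
      have hrw : ((8 * R0 / ‖ξ‖) ^ ((n : ℝ) / p - 1)) ^ c = (8 * R0) ^ a / ‖ξ‖ ^ a := by
        rw [← Real.rpow_mul hdiv, hexp, Real.div_rpow hR8.le (norm_nonneg ξ)]
      have hvc : v ξ ^ c ≤ (8 * R0) ^ a / ‖ξ‖ ^ a := by
        rw [← hrw]; exact Real.rpow_le_rpow (hvpos ξ) hb hc0.le
      have hna : 0 < ‖ξ‖ ^ a := Real.rpow_pos_of_pos hnorm0 a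
      calc ‖ξ‖ ^ a * v ξ ^ c ≤ ‖ξ‖ ^ a * ((8 * R0) ^ a / ‖ξ‖ ^ a) :=
            mul_le_mul_of_nonneg_left hvc hna.le
        _ = (8 * R0) ^ a := by field_simp
  -- define F and G
  set F : EuclideanSpace ℝ (Fin n) → ENNReal :=
    fun ξ => ENNReal.ofReal (‖ξ‖ ^ (δ * p) * v ξ ^ (q - δ * p)) with hF
  set G : EuclideanSpace ℝ (Fin n) → ENNReal :=
    fun ξ => ENNReal.ofReal (v ξ ^ (δ * p)) with hG
  have hmeasF : Measurable F := by
    apply Measurable.ennreal_ofReal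
    exact ((Real.continuous_rpow_const hδp0.le).measurable.comp measurable_norm).mul
      ((Real.continuous_rpow_const hqδp.le).measurable.comp hv)
  have hmeasG : Measurable G := by
    apply Measurable.ennreal_ofReal
    exact (Real.continuous_rpow_const hδp0.le).measurable.comp hv
  have hsplit : ∀ ξ : EuclideanSpace ℝ (Fin n),
      ENNReal.ofReal (‖ξ‖ ^ (δ * p) * v ξ ^ q) = (F * G) ξ := by
    intro ξ
    have : v ξ ^ q = v ξ ^ (q - δ * p) * v ξ ^ (δ * p) := by
      rw [← Real.rpow_add_of_nonneg (hvpos ξ) hqδp.le hδp0.le]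
      ring_nf
    simp only [hF, hG, Pi.mul_apply, this]
    rw [← ENNReal.ofReal_mul (mul_nonneg (Real.rpow_nonneg (norm_nonneg ξ) _)
      (Real.rpow_nonneg (hvpos ξ) _))]
    ring_nf
  have hconj : Real.HolderConjugate (1 / (1 - δ)) (1 / δ) := by
    rw [Real.holderConjugate_iff]; constructor
    · rw [lt_div_iff₀ h1δ]; linarith
    · rw [one_div, one_div, inv_inv, inv_inv]; ring
  have holder := ENNReal.lintegral_mul_le_Lp_mul_Lq volume hconj
    hmeasF.aemeasurable hmeasG.aemeasurable
  -- bound ∫⁻ F ^ (1/(1-δ))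
  have hFpt : ∀ ξ : EuclideanSpace ℝ (Fin n),
      F ξ ^ (1 / (1 - δ)) ≤ ENNReal.ofReal ((8 * R0) ^ a * v ξ ^ q) := by
    intro ξ
    have h0 : (0 : ℝ) ≤ ‖ξ‖ ^ (δ * p) * v ξ ^ (q - δ * p) :=
      mul_nonneg (Real.rpow_nonneg (norm_nonneg ξ) _) (Real.rpow_nonneg (hvpos ξ) _)
    have hr : (0 : ℝ) ≤ 1 / (1 - δ) := (one_div_pos.mpr h1δ).le
    rw [hF, ENNReal.ofReal_rpow_of_nonneg h0 hr]
    apply ENNReal.ofReal_le_ofReal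
    rw [Real.mul_rpow (Real.rpow_nonneg (norm_nonneg ξ) _) (Real.rpow_nonneg (hvpos ξ) _),
      ← Real.rpow_mul (norm_nonneg ξ), ← Real.rpow_mul (hvpos ξ)]
    have e1 : δ * p * (1 / (1 - δ)) = a := by rw [ha]; ring
    have e2 : (q - δ * p) * (1 / (1 - δ)) = q + c := by
      rw [hc]; field_simp; ring
    rw [e1, e2, Real.rpow_add_of_nonneg (hvpos ξ) hq0.le hc0.le]
    calc ‖ξ‖ ^ a * (v ξ ^ q * v ξ ^ c) = (‖ξ‖ ^ a * v ξ ^ c) * v ξ ^ q := by ring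
      _ ≤ (8 * R0) ^ a * v ξ ^ q :=
        mul_le_mul_of_nonneg_right (claim ξ) (Real.rpow_nonneg (hvpos ξ) q)
  have hlq : ∫⁻ ξ, ENNReal.ofReal (v ξ ^ q) = ENNReal.ofReal (∫ ξ, v ξ ^ q) :=
    (ofReal_integral_eq_lintegral_ofReal hLq
      (ae_of_all _ fun ξ => Real.rpow_nonneg (hvpos ξ) q)).symm
  have hlp : ∫⁻ ξ, ENNReal.ofReal (v ξ ^ p) = ENNReal.ofReal (∫ ξ, v ξ ^ p) :=
    (ofReal_integral_eq_lintegral_ofReal hLp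
      (ae_of_all _ fun ξ => Real.rpow_nonneg (hvpos ξ) p)).symm
  have hFint : ∫⁻ ξ, F ξ ^ (1 / (1 - δ)) ≤ ENNReal.ofReal ((8 * R0) ^ a * 2) := by
    calc ∫⁻ ξ, F ξ ^ (1 / (1 - δ))
        ≤ ∫⁻ ξ, ENNReal.ofReal ((8 * R0) ^ a * v ξ ^ q) := lintegral_mono hFpt
      _ = ∫⁻ ξ, ENNReal.ofReal ((8 * R0) ^ a) * ENNReal.ofReal (v ξ ^ q) := by
          congr 1; funext ξ
          rw [ENNReal.ofReal_mul (by positivity)]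
      _ = ENNReal.ofReal ((8 * R0) ^ a) * ∫⁻ ξ, ENNReal.ofReal (v ξ ^ q) :=
          lintegral_const_mul' _ _ ENNReal.ofReal_ne_top
      _ = ENNReal.ofReal ((8 * R0) ^ a) * ENNReal.ofReal (∫ ξ, v ξ ^ q) := by rw [hlq]
      _ ≤ ENNReal.ofReal ((8 * R0) ^ a) * ENNReal.ofReal 2 :=
          mul_le_mul_right (ENNReal.ofReal_le_ofReal hq2) _
      _ = ENNReal.ofReal ((8 * R0) ^ a * 2) := by
          rw [← ENNReal.ofReal_mul (by positivity)]
  have hGint : ∫⁻ ξ, G ξ ^ (1 / δ) = ENNReal.ofReal (∫ ξ, v ξ ^ p) := by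
    have : ∀ ξ : EuclideanSpace ℝ (Fin n), G ξ ^ (1 / δ) = ENNReal.ofReal (v ξ ^ p) := by
      intro ξ
      rw [hG, ENNReal.ofReal_rpow_of_nonneg (Real.rpow_nonneg (hvpos ξ) _) (by positivity),
        ← Real.rpow_mul (hvpos ξ)]
      congr 2
      field_simp
    simp_rw [this, hlp]
  have hIpnn : 0 ≤ ∫ ξ, v ξ ^ p := integral_nonneg fun ξ => Real.rpow_nonneg (hvpos ξ) p
  calc ∫⁻ ξ, ENNReal.ofReal (‖ξ‖ ^ (δ * p) * v ξ ^ q)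
      = ∫⁻ ξ, (F * G) ξ := by simp_rw [hsplit]
    _ ≤ (∫⁻ ξ, F ξ ^ (1 / (1 - δ))) ^ (1 / (1 / (1 - δ))) *
        (∫⁻ ξ, G ξ ^ (1 / δ)) ^ (1 / (1 / δ)) := holder
    _ = (∫⁻ ξ, F ξ ^ (1 / (1 - δ))) ^ (1 - δ) * (∫⁻ ξ, G ξ ^ (1 / δ)) ^ δ := by
        rw [one_div_one_div, one_div_one_div]
    _ ≤ ENNReal.ofReal ((8 * R0) ^ a * 2) ^ (1 - δ) *
        ENNReal.ofReal (∫ ξ, v ξ ^ p) ^ δ := by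
        rw [hGint]
        exact mul_le_mul_left (ENNReal.rpow_le_rpow hFint h1δ.le) _
    _ = ENNReal.ofReal (((8 * R0) ^ a * 2) ^ (1 - δ)) *
        ENNReal.ofReal ((∫ ξ, v ξ ^ p) ^ δ) := by
        rw [ENNReal.ofReal_rpow_of_nonneg (by positivity) h1δ.le,
          ENNReal.ofReal_rpow_of_nonneg hIpnn hδ.le]
    _ = ENNReal.ofReal (2 ^ (1 - δ) * (8 * R0) ^ (δ * p) * (∫ ξ, v ξ ^ p) ^ δ) := by
        rw [← ENNReal.ofReal_mul (by positivity)]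
        congr 1
        rw [Real.mul_rpow (by positivity) (by norm_num : (0:ℝ) ≤ 2),
          ← Real.rpow_mul hR8.le]
        have : a * (1 - δ) = δ * p := by rw [ha]; field_simp
        rw [this]; ring
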